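/- Let d ≥ 2 and let C ⊂ ℝ^d be a strictly convex analytic body with 0 in its interior, with support function P(t) = sup_{x∈C}(t,x). Set f(δ) = P(1,δ,0,…,0) and f̃(δ) = P(−1,−δ,0,…,0), and assume there exist δ, δ′ ∈ ℝ with f″(δ) f̃″(δ′) ≠ f̃″(δ) f″(δ′). Let m_1, …, m_K be pairwise distinct elements of 𝒵 ⊂ ℤ^{d+1} and let l_1, …, l_K, l̃_1, …, l̃_K be real numbers. If Σ_{i=1}^K l_i · P( (m_i,x), (m_i,y), 0, …, 0 ) + Σ_{i=1}^K l̃_i · P( −(m_i,x), −(m_i,y), 0, …, 0 ) = 0 for all x, y ∈ ℝ^{d+1}, then l_i = l̃_i = 0 for all i = 1, …, K. -/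

import Mathlib

open MeasureTheory Filter Pointwise
open scoped ENNReal RealInnerProductSpace Real

noncomputable section

abbrev Torus (d : ℕ) := Fin d → AddCircle (1 : ℝ)

def torusProj {d : ℕ} (v : EuclideanSpace ℝ (Fin d)) : Torus d :=
  fun i => (v i : AddCircle (1 : ℝ))

def suppFn {d : ℕ} (C : Set (EuclideanSpace ℝ (Fin d))) (t : EuclideanSpace ℝ (Fin d)) : ℝ :=
  sSup ((fun x => (inner ℝ t x : ℝ)) '' C)

structure StrictlyConvexAnalyticBody (d : ℕ) where
  carrier : Set (EuclideanSpace ℝ (Fin d))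
  isCompact : IsCompact carrier
  convex : Convex ℝ carrier
  nonemptyInterior : (interior carrier).Nonempty
  strictConvex : StrictConvex ℝ carrier
  analyticSupport : AnalyticOnNhd ℝ (suppFn carrier) {(0 : EuclideanSpace ℝ (Fin d))}ᶜ
  posCurvature : ∀ t w : EuclideanSpace ℝ (Fin d), t ≠ 0 → w ≠ 0 → (inner ℝ t w : ℝ) = 0 →
    0 < iteratedDeriv 2 (fun s : ℝ => suppFn carrier (t + s • w)) 0

def discrepancy (d : ℕ) (C : Set (EuclideanSpace ℝ (Fin d))) (r : ℝ)
    (α x : Torus d) (N : ℕ) : ℝ :=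
  (∑ n ∈ Finset.range N,
    Set.indicator (torusProj '' (r • C)) (fun _ => (1:ℝ)) (x + n • α))
    - N * (volume (r • C)).toReal

def lamMeasure (d : ℕ) (a b : ℝ) : Measure (ℝ × Torus d × Torus d) :=
  ((volume (Set.Icc a b))⁻¹ • volume.restrict (Set.Icc a b)).prod
    ((volume : Measure (Torus d)).prod (volume : Measure (Torus d)))


/-- The vector `(u, v, 0, …, 0)` of `ℝ^d`. -/
def pairVec (d : ℕ) (u v : ℝ) : EuclideanSpace ℝ (Fin d) :=
  (EuclideanSpace.equiv (Fin d) ℝ).symm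
    (fun i => if (i : ℕ) = 0 then u else if (i : ℕ) = 1 then v else 0)

/-- The set `𝒵` of primitive vectors of `ℤ^{d+1}` whose first nonzero coordinate
is positive. -/
def ZSet (d : ℕ) : Set (Fin (d+1) → ℤ) :=
  {m | Finset.univ.gcd m = 1 ∧ ∀ i, (∀ j, j < i → m j = 0) → 0 ≤ m i}

def dotInt {n : ℕ} (m : Fin n → ℤ) (x : Fin n → ℝ) : ℝ := ∑ j, (m j : ℝ) * x j

/- AUX START -/
open scoped Topology

section Aux

/-! ### One-variable calculus helpers -/

lemma an_cont {u : ℝ → ℝ} (hu : AnalyticOnNhd ℝ u Set.univ) : Continuous u := by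
  rw [← continuousOn_univ]
  exact hu.continuousOn

lemma deriv_shape {u v : ℝ → ℝ} (hu : AnalyticOnNhd ℝ u Set.univ)
    (hv : AnalyticOnNhd ℝ v Set.univ) (p q r : ℝ) (t : ℝ) :
    HasDerivAt (fun t => p * u (r*t) + q * v (r*t))
      ((p*r) * deriv u (r*t) + (q*r) * deriv v (r*t)) t := by
  have hline : HasDerivAt (fun t : ℝ => r * t) r t := by
    simpa using (hasDerivAt_id t).const_mul r
  have h1 : HasDerivAt (fun t : ℝ => u (r*t)) (deriv u (r*t) * r) t :=
    HasDerivAt.comp t ((hu _ trivial).differentiableAt.hasDerivAt) hline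
  have h2 : HasDerivAt (fun t : ℝ => v (r*t)) (deriv v (r*t) * r) t :=
    HasDerivAt.comp t ((hv _ trivial).differentiableAt.hasDerivAt) hline
  have := (h1.const_mul p).fun_add (h2.const_mul q)
  exact this.congr_deriv (by ring)

lemma deriv_shape_eq {u v : ℝ → ℝ} (hu : AnalyticOnNhd ℝ u Set.univ)
    (hv : AnalyticOnNhd ℝ v Set.univ) (p q r : ℝ) :
    deriv (fun t => p * u (r*t) + q * v (r*t))
      = fun t => (p*r) * deriv u (r*t) + (q*r) * deriv v (r*t) :=
  funext fun t => (deriv_shape hu hv p q r t).deriv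

lemma sum_deriv_zero {K : ℕ} (F : Fin K → ℝ → ℝ) (hF : ∀ j t, DifferentiableAt ℝ (F j) t)
    (h : ∀ t, ∑ j, F j t = 0) : ∀ t, ∑ j, deriv (F j) t = 0 := by
  intro t
  have h1 : deriv (fun t => ∑ j, F j t) t = ∑ j, deriv (F j) t :=
    deriv_fun_sum (fun j _ => hF j t)
  have h2 : (fun t : ℝ => ∑ j, F j t) = fun _ => 0 := funext h
  rw [h2, deriv_const] at h1
  exact h1.symm

lemma shape_sum_d2 {f g : ℝ → ℝ} (hf : AnalyticOnNhd ℝ f Set.univ)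
    (hg : AnalyticOnNhd ℝ g Set.univ) {K : ℕ} (p q r : Fin K → ℝ)
    (h0 : ∀ t, ∑ j, (p j * f (r j * t) + q j * g (r j * t)) = 0) :
    ∀ t, ∑ j, (p j * (r j)^2 * deriv (deriv f) (r j * t)
      + q j * (r j)^2 * deriv (deriv g) (r j * t)) = 0 := by
  have hdiff : ∀ j t, DifferentiableAt ℝ
      (fun t => p j * f (r j * t) + q j * g (r j * t)) t :=
    fun j t => (deriv_shape hf hg _ _ _ t).differentiableAt
  have h1 : ∀ t, ∑ j, deriv (fun t => p j * f (r j * t) + q j * g (r j * t)) t = 0 :=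
    sum_deriv_zero _ hdiff h0
  have h1' : ∀ t, ∑ j, ((p j * r j) * deriv f (r j * t)
      + (q j * r j) * deriv g (r j * t)) = 0 := by
    intro t
    rw [← h1 t]
    exact Finset.sum_congr rfl fun j _ => by rw [deriv_shape_eq hf hg]
  have hdiffG : ∀ j t, DifferentiableAt ℝ
      (fun t => (p j * r j) * deriv f (r j * t) + (q j * r j) * deriv g (r j * t)) t :=
    fun j t => (deriv_shape hf.deriv hg.deriv _ _ _ t).differentiableAt
  have h2 : ∀ t, ∑ j, deriv (fun t => (p j * r j) * deriv f (r j * t)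
      + (q j * r j) * deriv g (r j * t)) t = 0 := sum_deriv_zero _ hdiffG h1'
  intro t
  rw [← h2 t]
  refine Finset.sum_congr rfl fun j _ => ?_
  rw [deriv_shape_eq hf.deriv hg.deriv]
  ring

/-! ### The key blow-up/extraction lemma -/

lemma key_extraction {f g : ℝ → ℝ} (hf : AnalyticOnNhd ℝ f Set.univ)
    (hg : AnalyticOnNhd ℝ g Set.univ)
    {K : ℕ} (i₀ : Fin K) (A c P Q : Fin K → ℝ)
    (hA : ∀ j, j ≠ i₀ → A j ≠ 0) (hA0 : A i₀ = 0) (hc : c i₀ = 1) (σ : ℝ)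
    (hyp : ∀ᶠ ε in 𝓝[>] (0:ℝ), ∀ t : ℝ,
      ∑ j, ((|A j + ε * c j| * P j) * f (c j / (A j + ε * c j) * t)
        + (|A j + ε * c j| * Q j) * g (c j / (A j + ε * c j) * t)) = 0) :
    P i₀ * deriv (deriv f) σ + Q i₀ * deriv (deriv g) σ = 0 := by
  classical
  set TT : ℝ → Fin K → ℝ := fun ε j =>
    (|A j + ε * c j| * P j) * (c j / (A j + ε * c j))^2
        * deriv (deriv f) (c j / (A j + ε * c j) * (ε * σ))
      + (|A j + ε * c j| * Q j) * (c j / (A j + ε * c j))^2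
        * deriv (deriv g) (c j / (A j + ε * c j) * (ε * σ)) with hTT
  have hpos : ∀ᶠ ε in 𝓝[>] (0:ℝ), 0 < ε := eventually_mem_nhdsWithin
  have hkey : ∀ᶠ ε in 𝓝[>] (0:ℝ),
      P i₀ * deriv (deriv f) σ + Q i₀ * deriv (deriv g) σ
        = - ∑ j ∈ Finset.univ.erase i₀, ε * TT ε j := by
    filter_upwards [hyp, hpos] with ε hε hεpos
    have hεne : ε ≠ 0 := ne_of_gt hεpos
    have h2 := shape_sum_d2 hf hg (fun j => |A j + ε * c j| * P j)
      (fun j => |A j + ε * c j| * Q j) (fun j => c j / (A j + ε * c j)) hε (ε * σ)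
    have hsplit : (∑ j ∈ Finset.univ.erase i₀, TT ε j) + TT ε i₀ = ∑ j, TT ε j :=
      Finset.sum_erase_add _ _ (Finset.mem_univ i₀)
    have hsum : ∑ j, TT ε j = 0 := by rw [← h2]
    have hTTi : ε * TT ε i₀ = P i₀ * deriv (deriv f) σ + Q i₀ * deriv (deriv g) σ := by
      rw [hTT]
      simp only [hA0, hc, zero_add, mul_one]
      rw [show (1:ℝ) / ε * (ε * σ) = σ by field_simp, abs_of_pos hεpos]
      field_simp
    have hneg : TT ε i₀ = - ∑ j ∈ Finset.univ.erase i₀, TT ε j := by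
      rw [eq_neg_iff_add_eq_zero, add_comm]
      rw [hsplit, hsum]
    rw [← hTTi, hneg, mul_neg, Finset.mul_sum]
  have hS : Tendsto (fun ε => - ∑ j ∈ Finset.univ.erase i₀, ε * TT ε j)
      (𝓝[>] (0:ℝ)) (𝓝 0) := by
    have hSin : Tendsto (fun ε => ∑ j ∈ Finset.univ.erase i₀, ε * TT ε j)
        (𝓝 (0:ℝ)) (𝓝 0) := by
      have hzero : (0:ℝ) = ∑ j ∈ Finset.univ.erase i₀, (0:ℝ) := by simp
      rw [hzero]
      refine tendsto_finset_sum _ fun j hj => ?_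
      have hAj : A j ≠ 0 := hA j (Finset.ne_of_mem_erase hj)
      have ha : ContinuousAt (fun ε : ℝ => A j + ε * c j) 0 := by fun_prop
      have ha0 : (A j + 0 * c j) ≠ 0 := by simpa using hAj
      have hr : ContinuousAt (fun ε : ℝ => c j / (A j + ε * c j)) 0 :=
        continuousAt_const.div ha ha0
      have harg : ContinuousAt (fun ε : ℝ => c j / (A j + ε * c j) * (ε * σ)) 0 :=
        hr.mul (continuousAt_id.mul continuousAt_const)
      have hTTc : ContinuousAt (fun ε => TT ε j) 0 := by
        rw [hTT]
        exact ((((ha.abs.mul continuousAt_const).mul (hr.pow 2)).mul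
            (((an_cont hf.deriv.deriv).continuousAt).comp harg)).add
          (((ha.abs.mul continuousAt_const).mul (hr.pow 2)).mul
            (((an_cont hg.deriv.deriv).continuousAt).comp harg)))
      have := (continuousAt_id.mul hTTc).tendsto
      simpa [Pi.mul_def] using this
    simpa using (hSin.mono_left nhdsWithin_le_nhds).neg
  have hconst : Tendsto (fun _ : ℝ => P i₀ * deriv (deriv f) σ + Q i₀ * deriv (deriv g) σ)
      (𝓝[>] (0:ℝ)) (𝓝 0) := Tendsto.congr' (hkey.mono fun ε hε => hε.symm) hS
  exact tendsto_nhds_unique tendsto_const_nhds hconst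

/-! ### dotInt and primitive-vector lemmas -/

lemma dotInt_add_smul {n : ℕ} (m : Fin n → ℤ) (x v : Fin n → ℝ) (δ : ℝ) :
    dotInt m (fun k => x k + δ * v k) = dotInt m x + δ * dotInt m v := by
  simp only [dotInt, mul_add]
  rw [Finset.sum_add_distrib, Finset.mul_sum]
  congr 1
  exact Finset.sum_congr rfl fun k _ => by ring

lemma dotInt_smul {n : ℕ} (m : Fin n → ℤ) (x : Fin n → ℝ) (δ : ℝ) :
    dotInt m (fun k => δ * x k) = δ * dotInt m x := by
  simp only [dotInt]
  rw [Finset.mul_sum]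
  exact Finset.sum_congr rfl fun k _ => by ring

lemma dotInt_zero {n : ℕ} (m : Fin n → ℤ) : dotInt m (fun _ => 0) = 0 := by
  simp [dotInt]

lemma zset_exists_ne_zero {d : ℕ} {m : Fin (d+1) → ℤ} (hm : m ∈ ZSet d) :
    ∃ k, m k ≠ 0 := by
  by_contra hcon
  push_neg at hcon
  have : Finset.univ.gcd m = 0 := Finset.gcd_eq_zero_iff.mpr fun i _ => hcon i
  rw [hm.1] at this
  exact one_ne_zero this

lemma exists_dual {d : ℕ} {m : Fin (d+1) → ℤ} (hm : m ∈ ZSet d) :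
    ∃ w : Fin (d+1) → ℝ, dotInt m w = 1 := by
  obtain ⟨k₀, hk₀⟩ := zset_exists_ne_zero hm
  refine ⟨fun i => if i = k₀ then (m k₀ : ℝ)⁻¹ else 0, ?_⟩
  have : (m k₀ : ℝ) ≠ 0 := Int.cast_ne_zero.mpr hk₀
  simp only [dotInt, mul_ite, mul_zero, Finset.sum_ite_eq', Finset.mem_univ, if_true]
  field_simp

lemma ZSet_eq_of_rel {d : ℕ} {m m' : Fin (d+1) → ℤ} (hm : m ∈ ZSet d) (hm' : m' ∈ ZSet d)
    {k₀ : Fin (d+1)} (hk₀ : m k₀ ≠ 0)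
    (hrel : ∀ k, m k₀ * m' k = m' k₀ * m k) : m' = m := by
  classical
  have hgcd : Finset.univ.gcd (fun k => m k₀ * m' k)
      = Finset.univ.gcd (fun k => m' k₀ * m k) :=
    Finset.gcd_congr rfl fun k _ => hrel k
  rw [Finset.gcd_mul_left, Finset.gcd_mul_left, hm.1, hm'.1, mul_one, mul_one] at hgcd
  rw [← Int.abs_eq_normalize, ← Int.abs_eq_normalize] at hgcd
  rcases abs_eq_abs.mp hgcd with heq | heq
  · funext k
    have := hrel k
    rw [← heq] at this
    exact (mul_left_cancel₀ hk₀ this).symm ▸ rfl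
  · exfalso
    have hneg : ∀ k, m' k = - m k := by
      intro k
      have h := hrel k
      rw [heq] at h
      have h' : -m' k₀ * m' k = -m' k₀ * (- m k) := by linarith [h]
      have hm'k₀ : m' k₀ ≠ 0 := by
        intro h0
        rw [h0, neg_zero] at heq
        exact hk₀ heq
      exact mul_left_cancel₀ (neg_ne_zero.mpr hm'k₀) h'
    let s := Finset.univ.filter (fun i => m i ≠ 0)
    have hs : s.Nonempty := ⟨k₀, by simp [s, hk₀]⟩
    set i₀ := s.min' hs with hi₀
    have hmem : m i₀ ≠ 0 := by
      have := s.min'_mem hs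
      simpa [s] using this
    have hzero : ∀ j, j < i₀ → m j = 0 := by
      intro j hj
      by_contra hcon
      have : j ∈ s := by simp [s, hcon]
      exact absurd (s.min'_le j this) (not_le.mpr hj)
    have h1 : 0 ≤ m i₀ := hm.2 i₀ hzero
    have h2 : 0 ≤ m' i₀ := hm'.2 i₀ fun j hj => by rw [hneg j, hzero j hj, neg_zero]
    rw [hneg i₀] at h2
    omega

lemma exists_perp {d : ℕ} {m m' : Fin (d+1) → ℤ} (hm : m ∈ ZSet d) (hm' : m' ∈ ZSet d)
    (hne : m' ≠ m) :
    ∃ v : Fin (d+1) → ℝ, dotInt m v = 0 ∧ dotInt m' v ≠ 0 := by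
  classical
  by_contra hcon
  push_neg at hcon
  obtain ⟨k₀, hk₀⟩ := zset_exists_ne_zero hm
  have hrel : ∀ k, m k₀ * m' k = m' k₀ * m k := by
    intro k
    by_cases hk : k = k₀
    · subst hk; ring
    · set v : Fin (d+1) → ℝ :=
        fun i => (if i = k then (m k₀ : ℝ) else 0) - (if i = k₀ then (m k : ℝ) else 0) with hv
      have h1 : dotInt m v = 0 := by
        simp only [dotInt, hv, mul_sub, mul_ite, mul_zero, Finset.sum_sub_distrib,
          Finset.sum_ite_eq', Finset.mem_univ, if_true]
        ring
      have h2 : dotInt m' v = 0 := hcon v h1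
      simp only [dotInt, hv, mul_sub, mul_ite, mul_zero, Finset.sum_sub_distrib,
        Finset.sum_ite_eq', Finset.mem_univ, if_true] at h2
      have hcast : ((m k₀ * m' k : ℤ) : ℝ) = ((m' k₀ * m k : ℤ) : ℝ) := by
        push_cast
        linarith
      exact_mod_cast hcast
  exact hne (ZSet_eq_of_rel hm hm' hk₀ hrel)

lemma exists_x0 {d K : ℕ} (m : Fin K → (Fin (d+1) → ℤ)) (hm : ∀ i, m i ∈ ZSet d)
    (hinj : Function.Injective m) (i₀ : Fin K) :
    ∃ x₀ : Fin (d+1) → ℝ, dotInt (m i₀) x₀ = 0 ∧ ∀ j, j ≠ i₀ → dotInt (m j) x₀ ≠ 0 := by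
  classical
  have hv : ∀ j : Fin K, j ≠ i₀ →
      ∃ v, dotInt (m i₀) v = 0 ∧ dotInt (m j) v ≠ 0 := by
    intro j hj
    exact exists_perp (hm i₀) (hm j) fun heq => hj (hinj heq)
  have main : ∀ s : Finset (Fin K), (∀ j ∈ s, j ≠ i₀) →
      ∃ x : Fin (d+1) → ℝ, dotInt (m i₀) x = 0 ∧ ∀ j ∈ s, dotInt (m j) x ≠ 0 := by
    intro s
    induction s using Finset.induction_on with
    | empty => exact fun _ => ⟨fun _ => 0, dotInt_zero _, fun j hj => absurd hj (by simp)⟩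
    | insert _ _ ha ih =>
      rename_i a s'
      intro hall
      obtain ⟨x, hx0, hxs⟩ := ih fun j hj => hall j (Finset.mem_insert_of_mem hj)
      obtain ⟨v, hv0, hva⟩ := hv a (hall a (Finset.mem_insert_self a s'))
      set bad : Finset ℝ :=
        insert (-(dotInt (m a) x)/(dotInt (m a) v))
          (s'.image fun j => -(dotInt (m j) x)/(dotInt (m j) v)) with hbad
      obtain ⟨δ, hδ⟩ := Infinite.exists_notMem_finset bad
      refine ⟨fun k => x k + δ * v k, ?_, ?_⟩
      · rw [dotInt_add_smul, hx0, hv0]; ring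
      · intro j hj hzero
        rw [dotInt_add_smul] at hzero
        rcases Finset.mem_insert.mp hj with rfl | hj'
        · apply hδ
          rw [hbad]
          have hδeq : δ = -(dotInt (m j) x)/(dotInt (m j) v) := by
            rw [eq_div_iff hva]; linarith
          rw [hδeq]
          exact Finset.mem_insert_self _ _
        · by_cases hvj : dotInt (m j) v = 0
          · rw [hvj, mul_zero, add_zero] at hzero
            exact hxs j hj' hzero
          · apply hδ
            rw [hbad]
            have hδeq : δ = -(dotInt (m j) x)/(dotInt (m j) v) := by
              rw [eq_div_iff hvj]; linarith
            rw [hδeq]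
            exact Finset.mem_insert_of_mem (Finset.mem_image_of_mem _ hj')
  obtain ⟨x, hx0, hxs⟩ := main (Finset.univ.erase i₀) (fun j hj => Finset.ne_of_mem_erase hj)
  exact ⟨x, hx0, fun j hj => hxs j (Finset.mem_erase.mpr ⟨hj, Finset.mem_univ j⟩)⟩

/-! ### pairVec and support function lemmas -/

lemma pairVec_apply (d : ℕ) (u v : ℝ) (i : Fin d) :
    pairVec d u v i = if (i : ℕ) = 0 then u else if (i : ℕ) = 1 then v else 0 := rfl

lemma smul_pairVec (d : ℕ) (a u v : ℝ) : a • pairVec d u v = pairVec d (a*u) (a*v) := by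
  ext i
  simp only [PiLp.smul_apply, pairVec_apply, smul_eq_mul]
  split_ifs <;> ring

lemma neg_pairVec (d : ℕ) (u v : ℝ) : -pairVec d u v = pairVec d (-u) (-v) := by
  ext i
  simp only [PiLp.neg_apply, pairVec_apply]
  split_ifs <;> ring

lemma pairVec_ne_zero {d : ℕ} (hd : 2 ≤ d) {u : ℝ} (v : ℝ) (hu : u ≠ 0) :
    pairVec d u v ≠ 0 := by
  intro hzero
  have h0 : pairVec d u v ⟨0, by omega⟩ = 0 := by rw [hzero]; rfl
  rw [pairVec_apply] at h0
  simp at h0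
  exact hu h0

lemma suppFn_smul {d : ℕ} {C : Set (EuclideanSpace ℝ (Fin d))} (hco : IsCompact C)
    (hne : C.Nonempty) {r : ℝ} (hr : 0 ≤ r) (v : EuclideanSpace ℝ (Fin d)) :
    suppFn C (r • v) = r * suppFn C v := by
  unfold suppFn
  have himg : (fun x => (inner ℝ (r • v) x : ℝ)) '' C
      = (fun y => r * y) '' ((fun x => (inner ℝ v x : ℝ)) '' C) := by
    rw [Set.image_image]
    apply Set.image_congr
    intro x _
    exact real_inner_smul_left _ _ _
  rw [himg]
  have hcont : Continuous (fun x : EuclideanSpace ℝ (Fin d) => (inner ℝ v x : ℝ)) :=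
    continuous_const.inner continuous_id
  have hbdd : BddAbove ((fun x => (inner ℝ v x : ℝ)) '' C) := (hco.image hcont).bddAbove
  have hlub : IsLUB ((fun x => (inner ℝ v x : ℝ)) '' C)
      (sSup ((fun x => (inner ℝ v x : ℝ)) '' C)) := isLUB_csSup (hne.image _) hbdd
  exact (hlub.mul_left hr).csSup_eq ((hne.image _).image _)

variable {d : ℕ} (C : StrictlyConvexAnalyticBody d)

/-- `f` of the informal statement. -/
def ffn : ℝ → ℝ := fun δ => suppFn C.carrier (pairVec d 1 δ)
/-- `f̃` of the informal statement. -/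
def gfn : ℝ → ℝ := fun δ => suppFn C.carrier (-pairVec d 1 δ)

lemma carrier_nonempty : C.carrier.Nonempty :=
  C.nonemptyInterior.mono interior_subset

lemma ffn_analytic (hd : 2 ≤ d) : AnalyticOnNhd ℝ (ffn C) Set.univ := by
  intro δ _
  have hline : AnalyticAt ℝ (fun δ : ℝ => pairVec d 1 δ) δ := by
    have hrw : (fun δ : ℝ => pairVec d 1 δ)
        = fun δ : ℝ => pairVec d 1 0 + δ • pairVec d 0 1 := by
      funext δ
      ext i
      simp only [pairVec_apply, PiLp.add_apply, PiLp.smul_apply, smul_eq_mul]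
      split_ifs <;> ring
    rw [hrw]
    exact analyticAt_const.add (analyticAt_id.smul analyticAt_const)
  exact (C.analyticSupport _ (by simp [pairVec_ne_zero hd δ one_ne_zero])).comp hline

lemma gfn_analytic (hd : 2 ≤ d) : AnalyticOnNhd ℝ (gfn C) Set.univ := by
  intro δ _
  have hline : AnalyticAt ℝ (fun δ : ℝ => -pairVec d 1 δ) δ := by
    have hrw : (fun δ : ℝ => -pairVec d 1 δ)
        = fun δ : ℝ => -pairVec d 1 0 + δ • pairVec d 0 (-1) := by
      funext δ
      ext i
      simp only [pairVec_apply, PiLp.add_apply, PiLp.smul_apply, PiLp.neg_apply, smul_eq_mul]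
      split_ifs <;> ring
    rw [hrw]
    exact analyticAt_const.add (analyticAt_id.smul analyticAt_const)
  refine (C.analyticSupport _ ?_).comp hline
  simp only [Set.mem_compl_iff, Set.mem_singleton_iff]
  intro hzero
  have : pairVec d 1 δ = 0 := by
    rw [← neg_neg (pairVec d 1 δ), hzero, neg_zero]
  exact pairVec_ne_zero hd δ one_ne_zero this

/-- The key sign-splitting identity. -/
lemma split_identity (hd : 2 ≤ d) {a : ℝ} (ha : a ≠ 0) (b lc ltc : ℝ) :
    lc * suppFn C.carrier (pairVec d a b) + ltc * suppFn C.carrier (pairVec d (-a) (-b))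
      = |a| * ((if 0 < a then lc else ltc) * ffn C (b/a)
          + (if 0 < a then ltc else lc) * gfn C (b/a)) := by
  have hco := C.isCompact
  have hne := carrier_nonempty C
  rcases ha.lt_or_gt with hneg | hpos
  · have h1 : pairVec d a b = (-a) • (-pairVec d 1 (b/a)) := by
      rw [neg_pairVec, smul_pairVec, show (-a * -1 : ℝ) = a by ring,
        show (-a * -(b/a) : ℝ) = b by field_simp <;> ring]
    have h2 : pairVec d (-a) (-b) = (-a) • pairVec d 1 (b/a) := by
      rw [smul_pairVec, show (-a * 1 : ℝ) = -a by ring,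
        show (-a * (b/a) : ℝ) = -b by field_simp <;> ring]
    rw [h1, h2, suppFn_smul hco hne (by linarith) _, suppFn_smul hco hne (by linarith) _]
    simp only [if_neg (not_lt.mpr (le_of_lt hneg))]
    rw [abs_of_neg hneg]
    show lc * (-a * gfn C (b/a)) + ltc * (-a * ffn C (b/a)) = _
    ring
  · have h1 : pairVec d a b = a • pairVec d 1 (b/a) := by
      rw [smul_pairVec, show (a * 1 : ℝ) = a by ring,
        show (a * (b/a) : ℝ) = b by field_simp <;> ring]
    have h2 : pairVec d (-a) (-b) = a • (-pairVec d 1 (b/a)) := by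
      rw [neg_pairVec, smul_pairVec, show (a * -1 : ℝ) = -a by ring,
        show (a * -(b/a) : ℝ) = -b by field_simp <;> ring]
    rw [h1, h2, suppFn_smul hco hne (le_of_lt hpos) _, suppFn_smul hco hne (le_of_lt hpos) _]
    simp only [if_pos hpos]
    rw [abs_of_pos hpos]
    show lc * (a * ffn C (b/a)) + ltc * (a * gfn C (b/a)) = _
    ring

/-! ### Two-by-two linear system -/

lemma solve2 {a b a' b' u v : ℝ} (hdet : a * b' ≠ b * a')
    (h1 : u * a + v * b = 0) (h2 : u * a' + v * b' = 0) : u = 0 ∧ v = 0 := by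
  have e1 : u * a = -(v * b) := by linarith
  have e2 : u * a' = -(v * b') := by linarith
  constructor
  · by_contra hu
    apply hdet
    have : u * (a * b') = u * (b * a') := by
      calc u * (a * b') = (u * a) * b' := by ring
        _ = -(v * b) * b' := by rw [e1]
        _ = -(v * b') * b := by ring
        _ = (u * a') * b := by rw [e2]
        _ = u * (b * a') := by ring
    exact mul_left_cancel₀ hu this
  · by_contra hv
    apply hdet
    have e1' : v * b = -(u * a) := by linarith
    have e2' : v * b' = -(u * a') := by linarith
    have : v * (a * b') = v * (b * a') := by
      calc v * (a * b') = (v * b') * a := by ring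
        _ = -(u * a') * a := by rw [e2']
        _ = -(u * a) * a' := by ring
        _ = (v * b) * a' := by rw [e1']
        _ = v * (b * a') := by ring
    exact mul_left_cancel₀ hv this

end Aux
/- AUX END -/

theorem support_function_combinations_independent_nonsymmetric
    (d : ℕ) (hd : 2 ≤ d) (C : StrictlyConvexAnalyticBody d)
    (h0 : (0 : EuclideanSpace ℝ (Fin d)) ∈ interior C.carrier)
    (hasym : ∃ δ δ' : ℝ,
      iteratedDeriv 2 (fun u : ℝ => suppFn C.carrier (pairVec d 1 u)) δ *
          iteratedDeriv 2 (fun u : ℝ => suppFn C.carrier (-pairVec d 1 u)) δ' ≠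
        iteratedDeriv 2 (fun u : ℝ => suppFn C.carrier (-pairVec d 1 u)) δ *
          iteratedDeriv 2 (fun u : ℝ => suppFn C.carrier (pairVec d 1 u)) δ')
    (K : ℕ) (m : Fin K → (Fin (d+1) → ℤ)) (hm : ∀ i, m i ∈ ZSet d)
    (hinj : Function.Injective m) (l ltilde : Fin K → ℝ)
    (h : ∀ x y : Fin (d+1) → ℝ,
      (∑ i, l i * suppFn C.carrier (pairVec d (dotInt (m i) x) (dotInt (m i) y))) +
        (∑ i, ltilde i *
          suppFn C.carrier (pairVec d (-dotInt (m i) x) (-dotInt (m i) y))) = 0) :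
    ∀ i, l i = 0 ∧ ltilde i = 0 := by
  intro i₀
  classical
  have hfA := ffn_analytic C hd
  have hgA := gfn_analytic C hd
  obtain ⟨x₁, hx₁⟩ := exists_dual (hm i₀)
  obtain ⟨x₀, hx₀0, hx₀⟩ := exists_x0 m hm hinj i₀
  set A : Fin K → ℝ := fun j => dotInt (m j) x₀ with hA_def
  set c : Fin K → ℝ := fun j => dotInt (m j) x₁ with hc_def
  set P : Fin K → ℝ :=
    fun j => if 0 < (if j = i₀ then (1:ℝ) else A j) then l j else ltilde j with hP_def
  set Q : Fin K → ℝ :=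
    fun j => if 0 < (if j = i₀ then (1:ℝ) else A j) then ltilde j else l j with hQ_def
  have hAne : ∀ j, j ≠ i₀ → A j ≠ 0 := fun j hj => hx₀ j hj
  have hA0 : A i₀ = 0 := hx₀0
  have hc1 : c i₀ = 1 := hx₁
  have hyp : ∀ᶠ ε in 𝓝[>] (0:ℝ), ∀ t : ℝ,
      ∑ j, ((|A j + ε * c j| * P j) * ffn C (c j / (A j + ε * c j) * t)
        + (|A j + ε * c j| * Q j) * gfn C (c j / (A j + ε * c j) * t)) = 0 := by
    have hpos : ∀ᶠ ε in 𝓝[>] (0:ℝ), 0 < ε := eventually_mem_nhdsWithin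
    have hsmall : ∀ᶠ ε in 𝓝[>] (0:ℝ), ∀ j, j ≠ i₀ → |ε * c j| < |A j| := by
      refine Filter.Eventually.filter_mono nhdsWithin_le_nhds ?_
      rw [Filter.eventually_all]
      intro j
      by_cases hj : j = i₀
      · exact Filter.Eventually.of_forall fun ε hne => absurd hj hne
      · have htend : Filter.Tendsto (fun ε : ℝ => |ε * c j|) (𝓝 0) (𝓝 |0 * c j|) :=
          ((continuous_abs.comp (continuous_id.mul continuous_const)).tendsto 0)
        have h0 : |(0:ℝ) * c j| < |A j| := by simpa using abs_pos.mpr (hAne j hj)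
        exact (htend.eventually_lt_const h0).mono fun ε hε _ => hε
    filter_upwards [hpos, hsmall] with ε hεpos hsm
    intro t
    have hsign : ∀ j, (A j + ε * c j ≠ 0)
        ∧ (0 < A j + ε * c j ↔ 0 < (if j = i₀ then (1:ℝ) else A j)) := by
      intro j
      by_cases hj : j = i₀
      · subst hj
        rw [hA0, hc1, if_pos rfl]
        constructor
        · simpa using (ne_of_gt hεpos)
        · constructor
          · intro _; norm_num
          · intro _; simpa using hεpos
      · obtain ⟨hlo, hhi⟩ := abs_lt.mp (hsm j hj)
        rw [if_neg hj]
        rcases (hAne j hj).lt_or_gt with hn | hp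
        · rw [abs_of_neg hn] at hlo hhi
          exact ⟨(show A j + ε * c j < 0 by linarith).ne,
            iff_of_false (not_lt.mpr (by linarith)) (not_lt.mpr (le_of_lt hn))⟩
        · rw [abs_of_pos hp] at hlo hhi
          exact ⟨(show 0 < A j + ε * c j by linarith).ne', iff_of_true (by linarith) hp⟩
    have hx : ∀ j, dotInt (m j) (fun k => x₀ k + ε * x₁ k) = A j + ε * c j :=
      fun j => dotInt_add_smul (m j) x₀ x₁ ε
    have hy : ∀ j, dotInt (m j) (fun k => t * x₁ k) = c j * t := by
      intro j
      rw [dotInt_smul]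
      ring
    have hid := h (fun k => x₀ k + ε * x₁ k) (fun k => t * x₁ k)
    rw [← Finset.sum_add_distrib] at hid
    calc ∑ j, ((|A j + ε * c j| * P j) * ffn C (c j / (A j + ε * c j) * t)
          + (|A j + ε * c j| * Q j) * gfn C (c j / (A j + ε * c j) * t))
        = ∑ j, (l j * suppFn C.carrier (pairVec d
              (dotInt (m j) (fun k => x₀ k + ε * x₁ k)) (dotInt (m j) (fun k => t * x₁ k)))
            + ltilde j * suppFn C.carrier (pairVec d
              (-dotInt (m j) (fun k => x₀ k + ε * x₁ k))
              (-dotInt (m j) (fun k => t * x₁ k)))) := by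
          refine Finset.sum_congr rfl fun j _ => ?_
          rw [hx j, hy j, split_identity C hd (hsign j).1 (c j * t) (l j) (ltilde j),
            if_congr (hsign j).2 rfl rfl, if_congr (hsign j).2 rfl rfl,
            mul_div_right_comm]
          simp only [hP_def, hQ_def]
          ring
      _ = 0 := hid
  have key : ∀ σ : ℝ, l i₀ * deriv (deriv (ffn C)) σ
      + ltilde i₀ * deriv (deriv (gfn C)) σ = 0 := by
    intro σ
    have hres := key_extraction hfA hgA i₀ A c P Q hAne hA0 hc1 σ hyp
    have hPi : P i₀ = l i₀ := by rw [hP_def]; simp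
    have hQi : Q i₀ = ltilde i₀ := by rw [hQ_def]; simp
    rwa [hPi, hQi] at hres
  have hit2 : ∀ u : ℝ → ℝ, iteratedDeriv 2 u = deriv (deriv u) := by
    intro u
    rw [iteratedDeriv_succ, iteratedDeriv_one]
  obtain ⟨δ, δ', hdet⟩ := hasym
  simp only [hit2] at hdet
  have hdet' : deriv (deriv (ffn C)) δ * deriv (deriv (gfn C)) δ'
      ≠ deriv (deriv (gfn C)) δ * deriv (deriv (ffn C)) δ' := hdet
  exact solve2 hdet' (key δ) (key δ')

end
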